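/- arXiv:1004.1268 — 2 statements merged into one kernel-verified Lean document; each statement's English description precedes it below -/
import Mathlib

section
/- The curvature tensor of the connection Γ^μ_{νλ} = −(x_ν δ^μ_λ + δ^μ_ν x_λ)/(x·x) on {x ∈ ℝ⁴ : x·x < 0} equals R^μ_{νλσ} = l⁻²(g_{νλ}δ^μ_σ − g_{νσ}δ^μ_λ), where g_{μν} = (l²/(x·x)²)(η_{μρ}η_{ντ} − η_{μν}η_{ρτ})x^ρx^τ; consequently the Ricci tensor satisfies R_{μν} = 3l⁻²g_{μν}. -/
open scoped BigOperators

/-- Sign of the Minkowski metric η = diag(1,-1,-1,-1). -/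
def etaS (μ : Fin 4) : ℝ := if μ = 0 then 1 else -1

/-- Minkowski metric components η_{μν}. -/
def etaM (μ ν : Fin 4) : ℝ := if μ = ν then etaS μ else 0

/-- Minkowski inner product x·y = η_{μν}x^μy^ν. -/
def mdot (x y : Fin 4 → ℝ) : ℝ := ∑ μ, etaS μ * x μ * y μ

/-- Lowered components x_μ = η_{μν}x^ν. -/
def lowerIdx (x : Fin 4 → ℝ) (μ : Fin 4) : ℝ := etaS μ * x μ

/-- Connection coefficients Γ^μ_{νλ}(x) = −(x_ν δ^μ_λ + δ^μ_ν x_λ)/(x·x). -/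
noncomputable def Gam (x : Fin 4 → ℝ) (μ ν lam : Fin 4) : ℝ :=
  -((lowerIdx x ν) * (if μ = lam then (1:ℝ) else 0)
    + (if μ = ν then (1:ℝ) else 0) * lowerIdx x lam) / mdot x x

/-- The degenerate metric, sign `s`: g_{μν} = s·(l²/(x·x)²)(η_{μρ}η_{ντ} − η_{μν}η_{ρτ})x^ρx^τ. -/
noncomputable def gten (l s : ℝ) (x : Fin 4 → ℝ) (μ ν : Fin 4) : ℝ :=
  s * (l ^ 2 / (mdot x x) ^ 2) *
    ∑ ρ, ∑ τ, (etaM μ ρ * etaM ν τ - etaM μ ν * etaM ρ τ) * x ρ * x τ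

/-- The degenerate (2,0)-tensor h^{μν} = l⁻⁴(x·x)x^μx^ν. -/
noncomputable def hten (l : ℝ) (x : Fin 4 → ℝ) (μ ν : Fin 4) : ℝ :=
  (1 / l ^ 4) * mdot x x * x μ * x ν

/-- Partial derivative ∂_μ f at x. -/
noncomputable def pd (f : (Fin 4 → ℝ) → ℝ) (μ : Fin 4) (x : Fin 4 → ℝ) : ℝ :=
  fderiv ℝ f x (Pi.single μ 1)

/-- Curvature R^μ_{νλσ} = ∂_λΓ^μ_{σν} − ∂_σΓ^μ_{λν} + Γ^μ_{λκ}Γ^κ_{σν} − Γ^μ_{σκ}Γ^κ_{λν}. -/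
noncomputable def curv (x : Fin 4 → ℝ) (μ ν lam σ : Fin 4) : ℝ :=
  pd (fun p => Gam p μ σ ν) lam x - pd (fun p => Gam p μ lam ν) σ x
    + ∑ κ, (Gam x μ lam κ * Gam x κ σ ν - Gam x μ σ κ * Gam x κ lam ν)

/-! ### Auxiliary lemmas -/

lemma etaM_symm (a b : Fin 4) : etaM a b = etaM b a := by
  unfold etaM
  rcases eq_or_ne a b with h | h
  · subst h; rfl
  · rw [if_neg h, if_neg (Ne.symm h)]

lemma hasFDerivAt_coord (x : Fin 4 → ℝ) (i : Fin 4) :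
    HasFDerivAt (fun p : Fin 4 → ℝ => p i)
      (ContinuousLinearMap.proj (R := ℝ) (φ := fun _ : Fin 4 => ℝ) i) x :=
  by exact (ContinuousLinearMap.proj (R := ℝ) (φ := fun _ : Fin 4 => ℝ) i).hasFDerivAt

lemma hasFDerivAt_mdot (x : Fin 4 → ℝ) :
    HasFDerivAt (fun p => mdot p p)
      (∑ i, (2 * etaS i * x i) • (ContinuousLinearMap.proj (R := ℝ) (φ := fun _ : Fin 4 => ℝ) i)) x := by
  have h : ∀ i : Fin 4, HasFDerivAt (fun p : Fin 4 → ℝ => etaS i * p i * p i)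
      ((2 * etaS i * x i) • (ContinuousLinearMap.proj (R := ℝ) (φ := fun _ : Fin 4 => ℝ) i)) x := by
    intro i
    have := (((hasFDerivAt_coord x i).const_mul (etaS i)).fun_mul (hasFDerivAt_coord x i))
    refine this.congr_fderiv ?_
    refine ContinuousLinearMap.ext fun v => ?_
    simp [ContinuousLinearMap.smul_apply]
    ring
  have := HasFDerivAt.fun_sum (fun i (_ : i ∈ Finset.univ) => h i)
  simpa [mdot] using this

lemma pd_Gam (x : Fin 4 → ℝ) (hx : mdot x x ≠ 0) (μ ν lam j : Fin 4) :
    pd (fun p => Gam p μ ν lam) j x =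
      (mdot x x * (-((etaM ν j) * (if μ = lam then (1:ℝ) else 0)
            + (if μ = ν then (1:ℝ) else 0) * (etaM lam j)))
        + (lowerIdx x ν * (if μ = lam then (1:ℝ) else 0)
            + (if μ = ν then (1:ℝ) else 0) * lowerIdx x lam) * (2 * lowerIdx x j))
        / (mdot x x) ^ 2 := by
  set A : ℝ := if μ = lam then (1:ℝ) else 0 with hA
  set B : ℝ := if μ = ν then (1:ℝ) else 0 with hB
  have hnum : HasFDerivAt (fun p : Fin 4 → ℝ => -((etaS ν * p ν) * A + B * (etaS lam * p lam)))
      (-(A • (etaS ν • ContinuousLinearMap.proj (R := ℝ) (φ := fun _ : Fin 4 => ℝ) ν)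
        + B • (etaS lam • ContinuousLinearMap.proj (R := ℝ) (φ := fun _ : Fin 4 => ℝ) lam))) x := by
    exact ((((hasFDerivAt_coord x ν).const_mul (etaS ν)).mul_const A).add
      (((hasFDerivAt_coord x lam).const_mul (etaS lam)).const_mul B)).neg
  have hinv : HasFDerivAt (fun p => (mdot p p)⁻¹)
      ((-(mdot x x ^ 2)⁻¹) • (∑ i, (2 * etaS i * x i) • (ContinuousLinearMap.proj (R := ℝ) (φ := fun _ : Fin 4 => ℝ) i))) x :=
    HasDerivAt.comp_hasFDerivAt (f := fun p => mdot p p) x (hasDerivAt_inv hx) (hasFDerivAt_mdot x)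
  have hdiv := hnum.fun_mul hinv
  have hfun : (fun p => Gam p μ ν lam)
      = fun p => (-((etaS ν * p ν) * A + B * (etaS lam * p lam))) * (mdot p p)⁻¹ := by
    funext p; simp [Gam, lowerIdx, hA, hB, div_eq_mul_inv]
  rw [pd, hfun, hdiv.fderiv]
  simp [ContinuousLinearMap.smul_apply, ContinuousLinearMap.sum_apply, Pi.single_apply,
    Finset.mul_sum, mul_ite, ite_mul, mul_zero, zero_mul, etaM, lowerIdx]
  split_ifs <;> field_simp <;> ring

lemma sum_GamGam (x : Fin 4 → ℝ) (hQ : mdot x x ≠ 0) (μ ν lam σ : Fin 4) :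
    ∑ κ, (Gam x μ lam κ * Gam x κ σ ν - Gam x μ σ κ * Gam x κ lam ν)
    = (- lowerIdx x lam * lowerIdx x ν * (if μ = σ then (1:ℝ) else 0)
       + lowerIdx x σ * lowerIdx x ν * (if μ = lam then (1:ℝ) else 0)) / (mdot x x)^2 := by
  have e : ∀ κ : Fin 4, (Gam x μ lam κ * Gam x κ σ ν - Gam x μ σ κ * Gam x κ lam ν)
      = ((lowerIdx x lam * (if μ = κ then (1:ℝ) else 0) + (if μ = lam then (1:ℝ) else 0) * lowerIdx x κ)
          * (lowerIdx x σ * (if κ = ν then (1:ℝ) else 0) + (if κ = σ then (1:ℝ) else 0) * lowerIdx x ν)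
        - (lowerIdx x σ * (if μ = κ then (1:ℝ) else 0) + (if μ = σ then (1:ℝ) else 0) * lowerIdx x κ)
          * (lowerIdx x lam * (if κ = ν then (1:ℝ) else 0) + (if κ = lam then (1:ℝ) else 0) * lowerIdx x ν))
        / (mdot x x)^2 := by
    intro κ
    simp only [Gam]
    field_simp
  rw [Finset.sum_congr rfl (fun κ _ => e κ), ← Finset.sum_div]
  congr 1
  simp only [add_mul, mul_add, mul_ite, ite_mul, one_mul, mul_one, zero_mul, mul_zero,
    Finset.sum_add_distrib, Finset.sum_sub_distrib, Finset.sum_ite_eq, Finset.sum_ite_eq',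
    Finset.mem_univ, if_true]
  split_ifs <;> simp_all <;> ring

lemma gten_eq (l : ℝ) (x : Fin 4 → ℝ) (μ ν : Fin 4) :
    gten l 1 x μ ν = (l ^ 2 / (mdot x x) ^ 2)
      * (lowerIdx x μ * lowerIdx x ν - etaM μ ν * mdot x x) := by
  unfold gten
  rw [one_mul]
  congr 1
  have e : ∀ ρ : Fin 4, ∑ τ, (etaM μ ρ * etaM ν τ - etaM μ ν * etaM ρ τ) * x ρ * x τ
      = etaM μ ρ * x ρ * (etaS ν * x ν) - etaM μ ν * (etaS ρ * x ρ * x ρ) := by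
    intro ρ
    simp only [sub_mul, Finset.sum_sub_distrib, etaM]
    congr 1
    · simp only [mul_ite, ite_mul, zero_mul, mul_zero, Finset.sum_ite_eq, Finset.sum_ite_eq',
        Finset.mem_univ, if_true, ite_self, Finset.sum_const_zero]
      split_ifs <;> ring
    · simp only [mul_ite, ite_mul, zero_mul, mul_zero, Finset.sum_ite_eq, Finset.sum_ite_eq',
        Finset.mem_univ, if_true, ite_self, Finset.sum_const_zero]
      split_ifs <;> ring
  rw [Finset.sum_congr rfl (fun ρ _ => e ρ), Finset.sum_sub_distrib]
  congr 1
  · simp only [etaM, ite_mul, zero_mul, mul_ite, mul_zero, Finset.sum_ite_eq, Finset.sum_ite_eq',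
      Finset.mem_univ, if_true, ite_self, Finset.sum_const_zero, lowerIdx]
  · rw [← Finset.mul_sum, mdot]

/-- On {x·x < 0} the curvature of Γ equals l⁻²(g_{νλ}δ^μ_σ − g_{νσ}δ^μ_λ) with
g = g⁺ (sign +1), and the Ricci tensor R_{μν} = R^λ_{μνλ} equals 3l⁻²g_{μν}. -/
theorem curvature_constant (l : ℝ) (hl : 0 < l) :
    ∀ x : Fin 4 → ℝ, mdot x x < 0 →
      (∀ μ ν lam σ : Fin 4, curv x μ ν lam σ =
        (1 / l ^ 2) * (gten l 1 x ν lam * (if μ = σ then (1:ℝ) else 0)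
          - gten l 1 x ν σ * (if μ = lam then (1:ℝ) else 0))) ∧
      (∀ μ ν : Fin 4, (∑ lam, curv x lam μ ν lam) = 3 * (1 / l ^ 2) * gten l 1 x μ ν) := by
  intro x hx
  have hQ : mdot x x ≠ 0 := hx.ne
  have hl0 : l ≠ 0 := hl.ne'
  have key : ∀ μ ν lam σ : Fin 4, curv x μ ν lam σ =
      (1 / l ^ 2) * (gten l 1 x ν lam * (if μ = σ then (1:ℝ) else 0)
        - gten l 1 x ν σ * (if μ = lam then (1:ℝ) else 0)) := by
    intro μ ν lam σ
    rw [curv, pd_Gam x hQ μ σ ν lam, pd_Gam x hQ μ lam ν σ, sum_GamGam x hQ μ ν lam σ,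
      gten_eq, gten_eq, etaM_symm lam σ]
    field_simp
    split_ifs <;> ring
  refine ⟨key, ?_⟩
  intro μ ν
  simp only [key]
  rw [Fin.sum_univ_four]
  fin_cases ν <;> simp <;> ring
end

section
/- For the pseudo-translation vector field ξ = H' with components ξ^μ = −ν⁻²·(x⁰/c)·x^μ (i.e. H' = −ν⁻²t x^μ∂_μ) on {x·x ≠ 0}, the Lie derivative of h^{μν} = l⁻⁴(x·x)x^μx^ν vanishes: ℒ_ξ h^{μν} = h^{μν}{}_{,λ}ξ^λ − h^{μλ}∂_λξ^ν − h^{λν}∂_λξ^μ = 0. -/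
open scoped BigOperators

/-- The pseudo-time-translation H' = −ν⁻²t x^μ∂_μ, in coordinates (x⁰ = ct, xⁱ),
with ν = c/l and t = x⁰/c: components ξ^μ = −ν⁻²(x⁰/c)x^μ. -/
noncomputable def Hprime (c l : ℝ) : (Fin 4 → ℝ) → Fin 4 → ℝ := fun p =>
  (-(l ^ 2 / c ^ 2) * (p 0 / c)) • p

lemma hasF_coord (x : Fin 4 → ℝ) (i : Fin 4) :
    HasFDerivAt (fun p : Fin 4 → ℝ => p i)
      (ContinuousLinearMap.proj i : (Fin 4 → ℝ) →L[ℝ] ℝ) x := by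
  exact (ContinuousLinearMap.proj (R := ℝ) (φ := fun _ : Fin 4 => ℝ) i).hasFDerivAt

lemma pd_hten (l : ℝ) (μ ν lam : Fin 4) (x : Fin 4 → ℝ) :
    pd (fun p => hten l p μ ν) lam x
      = (1/l^4) * (2 * etaS lam * x lam * x μ * x ν
          + mdot x x * ((if μ = lam then (1:ℝ) else 0) * x ν
            + x μ * (if ν = lam then (1:ℝ) else 0))) := by
  have hmdot' : HasFDerivAt (fun p : Fin 4 → ℝ => mdot p p)
      (∑ i : Fin 4, ((etaS i * x i) • (ContinuousLinearMap.proj i : (Fin 4 → ℝ) →L[ℝ] ℝ)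
        + x i • etaS i • (ContinuousLinearMap.proj i : (Fin 4 → ℝ) →L[ℝ] ℝ))) x := by
    simp only [mdot]
    exact HasFDerivAt.fun_sum (fun i _ =>
      ((hasF_coord x i).const_mul (etaS i)).mul (hasF_coord x i))
  have hf := ((hmdot'.const_mul (1/l^4)).mul (hasF_coord x μ)).mul (hasF_coord x ν)
  have hf' : HasFDerivAt (fun p : Fin 4 → ℝ => hten l p μ ν)
      ((1 / l ^ 4 * mdot x x * x μ) • (ContinuousLinearMap.proj ν : (Fin 4 → ℝ) →L[ℝ] ℝ) +
        x ν • ((1 / l ^ 4 * mdot x x) • (ContinuousLinearMap.proj μ : (Fin 4 → ℝ) →L[ℝ] ℝ) +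
          x μ • (1 / l ^ 4 : ℝ) •
            ∑ i : Fin 4, ((etaS i * x i) • (ContinuousLinearMap.proj i : (Fin 4 → ℝ) →L[ℝ] ℝ)
              + x i • etaS i • (ContinuousLinearMap.proj i : (Fin 4 → ℝ) →L[ℝ] ℝ)))) x := by
    simp only [hten]; exact hf
  rw [pd, hf'.fderiv]
  simp only [ContinuousLinearMap.add_apply, ContinuousLinearMap.smul_apply,
    ContinuousLinearMap.coe_sum', Finset.sum_apply,
    ContinuousLinearMap.proj_apply, Pi.single_apply, smul_eq_mul, mul_ite, mul_one, mul_zero,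
    Finset.sum_ite_eq, Finset.sum_ite_eq', Finset.mem_univ, if_true, Finset.sum_add_distrib]
  split_ifs <;> ring

lemma pd_Hprime (c l : ℝ) (ν lam : Fin 4) (x : Fin 4 → ℝ) :
    pd (fun p => Hprime c l p ν) lam x
      = -(l^2/c^3) * ((if lam = 0 then (1:ℝ) else 0) * x ν
          + x 0 * (if ν = lam then (1:ℝ) else 0)) := by
  have hf := (((hasF_coord x 0).const_mul (-(l^2/c^2)/c)).mul (hasF_coord x ν))
  have hf' : HasFDerivAt (fun p : Fin 4 → ℝ => Hprime c l p ν)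
      ((-(l ^ 2 / c ^ 2) / c * x 0) • (ContinuousLinearMap.proj ν : (Fin 4 → ℝ) →L[ℝ] ℝ)
        + x ν • (-(l ^ 2 / c ^ 2) / c) • (ContinuousLinearMap.proj 0 : (Fin 4 → ℝ) →L[ℝ] ℝ)) x := by
    have : (fun p : Fin 4 → ℝ => Hprime c l p ν)
        = fun p : Fin 4 → ℝ => (-(l ^ 2 / c ^ 2) / c * p 0) * p ν := by
      funext p; simp [Hprime]; ring
    rw [this]; exact hf
  rw [pd, hf'.fderiv]
  simp only [ContinuousLinearMap.add_apply, ContinuousLinearMap.smul_apply,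
    ContinuousLinearMap.proj_apply, Pi.single_apply, smul_eq_mul]
  have : ((if (0:Fin 4) = lam then (1:ℝ) else 0)) = (if lam = 0 then (1:ℝ) else 0) := by
    simp [eq_comm]
  rw [this]; ring

set_option maxHeartbeats 1000000 in
/-- The Lie derivative of h along H' vanishes:
ℒ_ξ h^{μν} = h^{μν}{}_{,λ}ξ^λ − h^{μλ}∂_λξ^ν − h^{λν}∂_λξ^μ = 0 on {x·x ≠ 0}. -/
theorem lie_derivative_h_Hprime (c l : ℝ) (hc : 0 < c) (hl : 0 < l) :
    ∀ x : Fin 4 → ℝ, mdot x x ≠ 0 → ∀ μ ν : Fin 4,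
      (∑ lam, pd (fun p => hten l p μ ν) lam x * Hprime c l x lam)
        - (∑ lam, hten l x μ lam * pd (fun p => Hprime c l p ν) lam x)
        - (∑ lam, hten l x lam ν * pd (fun p => Hprime c l p μ) lam x) = 0 := by
  intro x hx μ ν
  simp only [pd_hten, pd_Hprime]
  simp only [hten, Hprime, Pi.smul_apply, smul_eq_mul, mdot, Fin.sum_univ_four, etaS,
    show ((0:Fin 4) = 0) = True from by simp, show ((1:Fin 4) = 0) = False from by decide,
    show ((2:Fin 4) = 0) = False from by decide, show ((3:Fin 4) = 0) = False from by decide,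
    if_true, if_false, mul_one, mul_zero, one_mul, zero_mul, add_zero, zero_add]
  ring
end
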